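/- Let X be a Banach space, π an action of ℍ on X by linear isometric automorphisms, and f : ℍ → X a 1-Lipschitz 1-cocycle for π. Fix m, k ∈ ℕ, let f̃ := (I − P_m)∘f, and set v := −(1/k) ∑_{j=0}^{k−1} f̃(c^j). Then for every h ∈ ℍ: ‖f̃(h) − (π(h)v − v)‖ ≤ (2^m / k) · d_W(h, e). -/
import Mathlib


open scoped BigOperators

/-- The discrete Heisenberg group `ℍ`, realized via the coordinates of the
3×3 upper-triangular integer matrices `[[1, x, z], [0, 1, y], [0, 0, 1]]`
with unit diagonal. -/
@[ext] structure Heis where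
  x : ℤ
  y : ℤ
  z : ℤ

namespace Heis

instance : One Heis := ⟨⟨0, 0, 0⟩⟩
instance : Mul Heis := ⟨fun g h => ⟨g.x + h.x, g.y + h.y, g.z + h.z + g.x * h.y⟩⟩
instance : Inv Heis := ⟨fun g => ⟨-g.x, -g.y, -g.z + g.x * g.y⟩⟩

@[simp] lemma mul_def (g h : Heis) :
    g * h = ⟨g.x + h.x, g.y + h.y, g.z + h.z + g.x * h.y⟩ := rfl
@[simp] lemma one_def : (1 : Heis) = ⟨0, 0, 0⟩ := rfl
@[simp] lemma inv_def (g : Heis) : g⁻¹ = ⟨-g.x, -g.y, -g.z + g.x * g.y⟩ := rfl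

instance : Group Heis where
  mul_assoc g h k := by ext <;> simp <;> ring
  one_mul g := by ext <;> simp
  mul_one g := by ext <;> simp
  inv_mul_cancel g := by ext <;> simp <;> ring

/-- The generator `a`. -/
def A : Heis := ⟨1, 0, 0⟩
/-- The generator `b`. -/
def B : Heis := ⟨0, 1, 0⟩
/-- The commutator `c = a * b * a⁻¹ * b⁻¹`, a central element. -/
def C : Heis := A * B * A⁻¹ * B⁻¹
/-- The symmetric generating set `S = {a, b, a⁻¹, b⁻¹}`. -/
def S : Set Heis := {A, B, A⁻¹, B⁻¹}

/-- The word length of `g` with respect to the generating set `S`. -/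
noncomputable def wordLength (g : Heis) : ℕ :=
  sInf {n : ℕ | ∃ l : List Heis, l.length = n ∧ (∀ s ∈ l, s ∈ S) ∧ l.prod = g}

/-- The left-invariant word metric `d_W` on `ℍ` associated to `S`. -/
noncomputable def dW (g h : Heis) : ℕ := wordLength (g⁻¹ * h)

end Heis

/-- The averaging operator `P_n = 2^{−n}·∑_{j<2^n} π(c)^j` associated to an action `π` of
`ℍ` by linear isometric automorphisms, where `c = aba⁻¹b⁻¹`. -/
noncomputable def Pop {X : Type*} [NormedAddCommGroup X] [NormedSpace ℝ X]
    (π : Heis →* (X ≃ₗᵢ[ℝ] X)) (n : ℕ) (v : X) : X :=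
  ((2 : ℝ) ^ n)⁻¹ • ∑ j ∈ Finset.range (2 ^ n), (π Heis.C ^ j) v

/-- **Inequality (4.9) ("close to a coboundary").** Let `X` be a Banach space, `π` an
action of `ℍ` on `X` by linear isometric automorphisms and `f : ℍ → X` a `1`-Lipschitz
`1`-cocycle. Fix `m, k ∈ ℕ`, let `f̃ = (I − P_m)∘f` and
`v = −(1/k)·∑_{j<k} f̃(c^j)`. Then for every `h ∈ ℍ`,
`‖f̃(h) − (π(h)v − v)‖ ≤ (2^m/k)·d_W(h, e)`. -/
theorem heisenberg_cocycle_near_coboundary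
    (X : Type*) [NormedAddCommGroup X] [NormedSpace ℝ X]
    (π : Heis →* (X ≃ₗᵢ[ℝ] X))
    (f : Heis → X) (hcocycle : ∀ g h : Heis, f (g * h) = π g (f h) + f g)
    (hLip : ∀ g h : Heis, ‖f g - f h‖ ≤ (Heis.dW g h : ℝ))
    (m k : ℕ) (hm : 1 ≤ m) (hk : 1 ≤ k)
    (ftilde : Heis → X) (hft : ∀ h : Heis, ftilde h = f h - Pop π m (f h))
    (v : X) (hv : v = -((k : ℝ)⁻¹ • ∑ j ∈ Finset.range k, ftilde (Heis.C ^ j))) :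
    ∀ h : Heis,
      ‖ftilde h - (π h v - v)‖ ≤ (2 : ℝ) ^ m / (k : ℝ) * (Heis.dW h 1 : ℝ) := by
  -- `C` is central in `Heis`.
  have hC : ∀ g : Heis, Commute Heis.C g := by
    intro g
    show Heis.C * g = g * Heis.C
    ext <;> simp [Heis.C, Heis.A, Heis.B] <;> ring
  intro h
  have hk0 : (0:ℝ) < (k:ℝ) := by exact_mod_cast hk
  have hN0 : (0:ℝ) < (2:ℝ)^m := by positivity
  -- operators commute
  have hcommOp : ∀ (g : Heis) (j : ℕ), (π Heis.C ^ j) * π g = π g * (π Heis.C ^ j) := by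
    intro g j
    rw [← map_pow, ← map_mul, ← map_mul, ((hC g).pow_left j).eq]
  have hcommv : ∀ (g : Heis) (j : ℕ) (u : X),
      (π Heis.C ^ j) (π g u) = π g ((π Heis.C ^ j) u) := by
    intro g j u
    have h1 := congrArg (fun (e : X ≃ₗᵢ[ℝ] X) => e u) (hcommOp g j)
    simpa [LinearIsometryEquiv.coe_mul, Function.comp] using h1
  have hPopComm : ∀ (g : Heis) (u : X), Pop π m (π g u) = π g (Pop π m u) := by
    intro g u
    simp only [Pop]
    rw [map_smul, map_sum]
    congr 1
    exact Finset.sum_congr rfl fun j _ => hcommv g j u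
  have hPopAdd : ∀ u u' : X, Pop π m (u + u') = Pop π m u + Pop π m u' := by
    intro u u'
    simp only [Pop, map_add, Finset.sum_add_distrib, smul_add]
  -- `ftilde` is a cocycle
  have hftc : ∀ g h' : Heis, ftilde (g * h') = π g (ftilde h') + ftilde g := by
    intro g h'
    rw [hft, hft, hft, hcocycle, hPopAdd, hPopComm, map_sub]
    abel
  have key1 : ∀ j : ℕ, π h (ftilde (Heis.C ^ j))
      = (π Heis.C ^ j) (ftilde h) + ftilde (Heis.C ^ j) - ftilde h := by
    intro j
    have h1 := hftc h (Heis.C ^ j)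
    have h2 := hftc (Heis.C ^ j) h
    have h3 : h * Heis.C ^ j = Heis.C ^ j * h := ((hC h).pow_left j).eq.symm
    rw [h3, h2] at h1
    simp only [map_pow] at h1
    exact eq_sub_iff_add_eq.mpr h1.symm
  have sumcong : ∑ j ∈ Finset.range k, π h (ftilde (Heis.C ^ j))
      = (∑ j ∈ Finset.range k, (π Heis.C ^ j) (ftilde h))
        + (∑ j ∈ Finset.range k, ftilde (Heis.C ^ j)) - k • ftilde h := by
    have hc : ∑ j ∈ Finset.range k, π h (ftilde (Heis.C ^ j))
        = ∑ j ∈ Finset.range k,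
            ((π Heis.C ^ j) (ftilde h) + ftilde (Heis.C ^ j) - ftilde h) :=
      Finset.sum_congr rfl fun j _ => key1 j
    rw [hc, Finset.sum_sub_distrib, Finset.sum_add_distrib, Finset.sum_const,
      Finset.card_range]
  have hkk : (k:ℝ)⁻¹ • (k • (ftilde h) : X) = ftilde h := by
    rw [← Nat.cast_smul_eq_nsmul ℝ, smul_smul, inv_mul_cancel₀ (ne_of_gt hk0), one_smul]
  have main_eq : ftilde h - (π h v - v)
      = (k:ℝ)⁻¹ • ∑ j ∈ Finset.range k, (π Heis.C ^ j) (ftilde h) := by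
    rw [hv, map_neg, map_smul, map_sum, sumcong, smul_sub, smul_add, hkk]
    abel
  -- the key operator bound
  have Tmul : ∀ (i j : ℕ) (u : X), (π Heis.C ^ (j + i)) u
      = (π Heis.C ^ j) ((π Heis.C ^ i) u) := by
    intro i j u
    rw [pow_add]
    rfl
  set w := f h with hw
  have hsum1 : ∑ j ∈ Finset.range k, (π Heis.C ^ j) (ftilde h)
      = (∑ j ∈ Finset.range k, (π Heis.C ^ j) w)
        - ((2:ℝ)^m)⁻¹ • ∑ j ∈ Finset.range k, ∑ i ∈ Finset.range (2^m),
            (π Heis.C ^ (j + i)) w := by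
    rw [Finset.smul_sum, ← Finset.sum_sub_distrib]
    refine Finset.sum_congr rfl fun j _ => ?_
    rw [hft h, Pop, map_sub, map_smul, map_sum]
    congr 2
    exact Finset.sum_congr rfl fun i _ => (Tmul i j w).symm
  have hsum2 : ((2:ℝ)^m) • ∑ j ∈ Finset.range k, (π Heis.C ^ j) (ftilde h)
      = ∑ i ∈ Finset.range (2^m),
          ((∑ j ∈ Finset.range k, (π Heis.C ^ j) w)
            - ∑ j ∈ Finset.range k, (π Heis.C ^ (j + i)) w) := by
    rw [hsum1, smul_sub, smul_inv_smul₀ (ne_of_gt hN0), Finset.sum_comm,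
      Finset.sum_sub_distrib, Finset.sum_const, Finset.card_range,
      ← Nat.cast_smul_eq_nsmul ℝ]
    push_cast
    ring_nf
  have Didentity : ∀ i : ℕ,
      (∑ j ∈ Finset.range k, (π Heis.C ^ j) w)
        - ∑ j ∈ Finset.range k, (π Heis.C ^ (j + i)) w
      = ∑ j ∈ Finset.range i, ((π Heis.C ^ j) w - (π Heis.C ^ (j + k)) w) := by
    intro i
    have hA := Finset.sum_range_add (fun x => (π Heis.C ^ x) w) k i
    have hB := Finset.sum_range_add (fun x => (π Heis.C ^ x) w) i k
    have hA' : ∑ x ∈ Finset.range i, (π Heis.C ^ (k + x)) w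
        = ∑ x ∈ Finset.range i, (π Heis.C ^ (x + k)) w :=
      Finset.sum_congr rfl fun x _ => by rw [add_comm]
    have hB' : ∑ x ∈ Finset.range k, (π Heis.C ^ (i + x)) w
        = ∑ x ∈ Finset.range k, (π Heis.C ^ (x + i)) w :=
      Finset.sum_congr rfl fun x _ => by rw [add_comm]
    rw [hA'] at hA
    rw [hB'] at hB
    rw [add_comm k i] at hA
    have := hA.symm.trans hB
    rw [Finset.sum_sub_distrib, sub_eq_sub_iff_add_eq_add]
    exact this
  have hDbound : ∀ i : ℕ,
      ‖∑ j ∈ Finset.range i, ((π Heis.C ^ j) w - (π Heis.C ^ (j + k)) w)‖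
        ≤ (i:ℝ) * (2 * ‖w‖) := by
    intro i
    calc ‖∑ j ∈ Finset.range i, ((π Heis.C ^ j) w - (π Heis.C ^ (j + k)) w)‖
        ≤ ∑ j ∈ Finset.range i, ‖(π Heis.C ^ j) w - (π Heis.C ^ (j + k)) w‖ :=
          norm_sum_le _ _
      _ ≤ ∑ _j ∈ Finset.range i, (2 * ‖w‖) := by
          refine Finset.sum_le_sum fun j _ => ?_
          rw [Tmul k j w, ← map_sub, LinearIsometryEquiv.norm_map]
          calc ‖w - (π Heis.C ^ k) w‖ ≤ ‖w‖ + ‖(π Heis.C ^ k) w‖ := norm_sub_le _ _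
            _ = 2 * ‖w‖ := by rw [LinearIsometryEquiv.norm_map]; ring
      _ = (i:ℝ) * (2 * ‖w‖) := by
          rw [Finset.sum_const, Finset.card_range, nsmul_eq_mul]
  have hgauss : (∑ i ∈ Finset.range (2^m), (i:ℝ)) * 2 ≤ (2:ℝ)^m * (2:ℝ)^m := by
    have h1 : (∑ i ∈ Finset.range (2^m), i) * 2 = 2^m * (2^m - 1) :=
      Finset.sum_range_id_mul_two (2^m)
    have h2 : (2^m) * (2^m - 1) ≤ 2^m * 2^m := Nat.mul_le_mul_left _ (Nat.sub_le _ _)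
    have h3 : ((∑ i ∈ Finset.range (2^m), i) * 2 : ℕ) ≤ 2^m * 2^m := h1 ▸ h2
    calc (∑ i ∈ Finset.range (2^m), (i:ℝ)) * 2
        = (((∑ i ∈ Finset.range (2^m), i) * 2 : ℕ) : ℝ) := by push_cast; ring
      _ ≤ (((2^m * 2^m : ℕ)) : ℝ) := by exact_mod_cast h3
      _ = (2:ℝ)^m * (2:ℝ)^m := by push_cast; ring
  have keybound : ‖∑ j ∈ Finset.range k, (π Heis.C ^ j) (ftilde h)‖ ≤ (2:ℝ)^m * ‖w‖ := by
    have hle : ((2:ℝ)^m) * ‖∑ j ∈ Finset.range k, (π Heis.C ^ j) (ftilde h)‖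
        ≤ ((2:ℝ)^m) * ((2:ℝ)^m * ‖w‖) := by
      calc ((2:ℝ)^m) * ‖∑ j ∈ Finset.range k, (π Heis.C ^ j) (ftilde h)‖
          = ‖((2:ℝ)^m) • ∑ j ∈ Finset.range k, (π Heis.C ^ j) (ftilde h)‖ := by
            rw [norm_smul, Real.norm_eq_abs, abs_of_pos hN0]
        _ = ‖∑ i ∈ Finset.range (2^m),
              ((∑ j ∈ Finset.range k, (π Heis.C ^ j) w)
                - ∑ j ∈ Finset.range k, (π Heis.C ^ (j + i)) w)‖ := by rw [hsum2]
        _ ≤ ∑ i ∈ Finset.range (2^m),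
              ‖(∑ j ∈ Finset.range k, (π Heis.C ^ j) w)
                - ∑ j ∈ Finset.range k, (π Heis.C ^ (j + i)) w‖ := norm_sum_le _ _
        _ ≤ ∑ i ∈ Finset.range (2^m), (i:ℝ) * (2 * ‖w‖) := by
            refine Finset.sum_le_sum fun i _ => ?_
            rw [Didentity i]
            exact hDbound i
        _ = (∑ i ∈ Finset.range (2^m), (i:ℝ)) * 2 * ‖w‖ := by
            rw [Finset.sum_mul, Finset.sum_mul]
            exact Finset.sum_congr rfl fun i _ => by ring
        _ ≤ (2:ℝ)^m * (2:ℝ)^m * ‖w‖ := by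
            have := hgauss
            have hw0 : (0:ℝ) ≤ ‖w‖ := norm_nonneg _
            nlinarith
        _ = ((2:ℝ)^m) * ((2:ℝ)^m * ‖w‖) := by ring
    exact le_of_mul_le_mul_left hle hN0
  -- f vanishes at the identity, hence ‖f h‖ ≤ d_W(h,1)
  have hf1 : f (1:Heis) = 0 := by
    have h1 := hcocycle 1 1
    rw [one_mul, map_one] at h1
    simpa using h1
  have hfw : ‖w‖ ≤ (Heis.dW h 1 : ℝ) := by
    have h1 := hLip h 1
    rwa [hf1, sub_zero] at h1
  rw [main_eq, norm_smul, Real.norm_eq_abs, abs_of_pos (inv_pos.mpr hk0)]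
  calc (k:ℝ)⁻¹ * ‖∑ j ∈ Finset.range k, (π Heis.C ^ j) (ftilde h)‖
      ≤ (k:ℝ)⁻¹ * ((2:ℝ)^m * ‖w‖) := by
        exact mul_le_mul_of_nonneg_left keybound (le_of_lt (inv_pos.mpr hk0))
    _ ≤ (k:ℝ)⁻¹ * ((2:ℝ)^m * (Heis.dW h 1 : ℝ)) :=
        mul_le_mul_of_nonneg_left (mul_le_mul_of_nonneg_left hfw hN0.le)
          (inv_pos.mpr hk0).le
    _ = (2:ℝ)^m / (k:ℝ) * (Heis.dW h 1 : ℝ) := by ring
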